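/- Let k ≥ 2, β > 0, let q be a strictly positive probability vector on Fin k, let r : Fin k → ℝ, and define π̂_i = q_i·exp(r_i/β)/Σ_j q_j·exp(r_j/β). For any two distinct indices i₁, i₂, let p_ref = q_{i₁}/(q_{i₁}+q_{i₂}) and p_rew = exp(r_{i₁}/β)/(exp(r_{i₁}/β)+exp(r_{i₂}/β)). Then π̂_{i₁}/(π̂_{i₁}+π̂_{i₂}) = p_ref·p_rew/(p_ref·p_rew + (1−p_ref)·(1−p_rew)). That is, the pairwise preference of the KL RLHF–aligned model is the normalized product of the reference model's and the reward model's pairwise preferences. -/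

import Mathlib

/-- The pairwise preference of the KL RLHF–aligned model is the normalized product of
the reference model's and the reward model's pairwise preferences. -/
theorem kl_rlhf_pairwise_preference_product
    (k : ℕ) (hk : 2 ≤ k) (β : ℝ) (hβ : 0 < β)
    (q r : Fin k → ℝ) (hq : ∀ i, 0 < q i) (hqs : ∑ i, q i = 1)
    (πhat : Fin k → ℝ)
    (hπhat : ∀ i, πhat i = q i * Real.exp (r i / β) / ∑ j, q j * Real.exp (r j / β))
    (i₁ i₂ : Fin k) (hne : i₁ ≠ i₂)
    (pref prew : ℝ)
    (hpref : pref = q i₁ / (q i₁ + q i₂))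
    (hprew : prew = Real.exp (r i₁ / β) / (Real.exp (r i₁ / β) + Real.exp (r i₂ / β))) :
    πhat i₁ / (πhat i₁ + πhat i₂)
      = pref * prew / (pref * prew + (1 - pref) * (1 - prew)) := by
  set e₁ := Real.exp (r i₁ / β) with he₁
  set e₂ := Real.exp (r i₂ / β) with he₂
  have he₁pos : 0 < e₁ := Real.exp_pos _
  have he₂pos : 0 < e₂ := Real.exp_pos _
  have hS : 0 < ∑ j, q j * Real.exp (r j / β) := by
    apply Finset.sum_pos
    · intro i _; exact mul_pos (hq i) (Real.exp_pos _)
    · exact ⟨i₁, Finset.mem_univ _⟩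
  set S := ∑ j, q j * Real.exp (r j / β) with hSdef
  have hq12 : 0 < q i₁ + q i₂ := add_pos (hq i₁) (hq i₂)
  have he12 : 0 < e₁ + e₂ := add_pos he₁pos he₂pos
  have hab : 0 < q i₁ * e₁ + q i₂ * e₂ :=
    add_pos (mul_pos (hq i₁) he₁pos) (mul_pos (hq i₂) he₂pos)
  rw [hπhat i₁, hπhat i₂, hpref, hprew]
  have hd : q i₁ / (q i₁ + q i₂) * (e₁ / (e₁ + e₂)) +
      (1 - q i₁ / (q i₁ + q i₂)) * (1 - e₁ / (e₁ + e₂)) =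
      (q i₁ * e₁ + q i₂ * e₂) / ((q i₁ + q i₂) * (e₁ + e₂)) := by
    field_simp
    ring
  rw [← add_div, div_div_div_cancel_right₀ hS.ne', hd, div_mul_div_comm,
    div_div_div_cancel_right₀ (by positivity : ((q i₁ + q i₂) * (e₁ + e₂)) ≠ 0)]
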